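/- Let X be a finite simple graph with adjacency matrix A_X, let B be a unital C*-algebra, and let u ∈ M_{V(X)}(B) be a magic unitary. Then u commutes with A_X (i.e., u A_X = A_X u, with entries of A_X regarded as scalars) if and only if for all vertices i, j, k, l with rel(i,k) ≠ rel(j,l) one has u_{ij} u_{kl} = 0, where rel(i,k) takes the value 'equal' if i = k, 'adjacent' if i ~ k, and 'non-adjacent' otherwise. -/
import Mathlib


/-- A magic unitary: a square matrix of self-adjoint idempotents whose rows
and columns each sum to `1`. -/
def IsMagicUnitary {A : Type*} [Ring A] [StarRing A] {n : Type*} [Fintype n]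
    (u : Matrix n n A) : Prop :=
  (∀ i j, star (u i j) = u i j) ∧ (∀ i j, u i j * u i j = u i j) ∧
    (∀ i, ∑ j, u i j = 1) ∧ (∀ j, ∑ i, u i j = 1)

/-- The relation type of a pair of vertices: `0` if equal, `1` if adjacent,
`2` if distinct and non-adjacent. -/
def relType {V : Type*} [DecidableEq V] (G : SimpleGraph V) [DecidableRel G.Adj]
    (i k : V) : Fin 3 :=
  if i = k then 0 else if G.Adj i k then 1 else 2

/-- In a unital C⋆-algebra, self-adjoint idempotents summing to `1` are
pairwise orthogonal. -/
lemma magic_orth {n : Type*} [Fintype n] [DecidableEq n]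
    {B : Type*} [NormedRing B] [StarRing B] [CStarRing B]
    [NormedAlgebra ℂ B] [CompleteSpace B] [StarModule ℂ B]
    (p : n → B) (hsa : ∀ m, star (p m) = p m) (hid : ∀ m, p m * p m = p m)
    (hsum : ∑ m, p m = 1) {j l : n} (hjl : j ≠ l) : p j * p l = 0 := by
  letI : CStarAlgebra B := ⟨⟩
  letI := CStarAlgebra.spectralOrder B
  haveI := CStarAlgebra.spectralOrderedRing B
  have htot : ∑ m, p j * p m * p j = p j := by
    have : ∑ m, p j * p m * p j = p j * (∑ m, p m) * p j := by
      rw [Finset.mul_sum, Finset.sum_mul]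
    rw [this, hsum, mul_one, hid]
  have hkey : ∑ m ∈ Finset.univ.erase j, p j * p m * p j = 0 := by
    have h2 := Finset.add_sum_erase Finset.univ (fun m => p j * p m * p j)
      (Finset.mem_univ j)
    rw [htot] at h2
    have h3 : p j * p j * p j = p j := by rw [hid, hid]
    have h4 : p j + ∑ m ∈ Finset.univ.erase j, p j * p m * p j = p j := by
      simpa [h3] using h2
    exact add_eq_left.mp h4
  have hnn : ∀ m ∈ Finset.univ.erase j, 0 ≤ p j * p m * p j := by
    intro m _
    have := star_mul_self_nonneg (p m * p j)
    rwa [star_mul, hsa, hsa, mul_assoc, ← mul_assoc (p m), hid, ← mul_assoc] at this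
  have hz : p j * p l * p j = 0 :=
    (Finset.sum_eq_zero_iff_of_nonneg hnn).mp hkey l
      (Finset.mem_erase.mpr ⟨hjl.symm, Finset.mem_univ l⟩)
  have hz2 : star (p l * p j) * (p l * p j) = 0 := by
    rw [star_mul, hsa, hsa, mul_assoc, ← mul_assoc (p l), hid, ← mul_assoc]
    exact hz
  have hz3 : p l * p j = 0 := (CStarRing.star_mul_self_eq_zero_iff _).mp hz2
  calc p j * p l = star (p l * p j) := by rw [star_mul, hsa, hsa]
    _ = 0 := by rw [hz3, star_zero]

lemma relType_eq_one' {V : Type*} [DecidableEq V] (G : SimpleGraph V)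
    [DecidableRel G.Adj] {i k : V} (h : G.Adj i k) : relType G i k = 1 := by
  unfold relType
  rw [if_neg h.ne, if_pos h]

lemma relType_ne_one' {V : Type*} [DecidableEq V] (G : SimpleGraph V)
    [DecidableRel G.Adj] {i k : V} (h : ¬ G.Adj i k) : relType G i k ≠ 1 := by
  unfold relType
  by_cases h1 : i = k
  · rw [if_pos h1]; decide
  · rw [if_neg h1, if_neg h]; decide

/-- A magic unitary commutes with the adjacency matrix of a graph iff
`u i j * u k l = 0` whenever `rel(i,k) ≠ rel(j,l)`. -/
theorem stmt12 {V : Type*} [Fintype V] [DecidableEq V]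
    (G : SimpleGraph V) [DecidableRel G.Adj]
    {B : Type*} [NormedRing B] [StarRing B] [CStarRing B]
    [NormedAlgebra ℂ B] [CompleteSpace B] [StarModule ℂ B]
    (u : Matrix V V B) (hu : IsMagicUnitary u) :
    u * G.adjMatrix B = G.adjMatrix B * u ↔
      ∀ i j k l, relType G i k ≠ relType G j l → u i j * u k l = 0 := by
  obtain ⟨hsa, hid, hrow, hcol⟩ := hu
  have horr : ∀ (i : V) {j l : V}, j ≠ l → u i j * u i l = 0 := fun i _ _ h =>
    magic_orth (u i) (fun m => hsa i m) (fun m => hid i m) (hrow i) h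
  have horc : ∀ (j : V) {i k : V}, i ≠ k → u i j * u k j = 0 := fun j _ _ h =>
    magic_orth (fun m => u m j) (fun m => hsa m j) (fun m => hid m j) (hcol j) h
  constructor
  · intro hcomm i j k l hrel
    by_cases hik : i = k
    · subst hik
      have hjl : j ≠ l := fun h => hrel (by simp [relType, h])
      exact horr i hjl
    · by_cases hjl : j = l
      · subst hjl
        exact horc j hik
      · -- both distinct; relTypes are 1 or 2 and differ
        have hent : (u * G.adjMatrix B) i l = (G.adjMatrix B * u) i l := by
          rw [hcomm]
        rw [SimpleGraph.mul_adjMatrix_apply, SimpleGraph.adjMatrix_mul_apply] at hent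
        have key : ∑ n ∈ G.neighborFinset l, u i j * (u i n * u k l)
            = ∑ m ∈ G.neighborFinset i, u i j * (u m l * u k l) := by
          have := congrArg (fun x => u i j * x * u k l) hent
          simpa [Finset.sum_mul, Finset.mul_sum, mul_assoc] using this
        by_cases hadik : G.Adj i k
        · have hadjl : ¬ G.Adj j l := by
            intro hadjl
            exact hrel (by rw [relType_eq_one' G hadik, relType_eq_one' G hadjl])
          -- LHS of key is 0
          have hL : ∑ n ∈ G.neighborFinset l, u i j * (u i n * u k l) = 0 := by
            apply Finset.sum_eq_zero
            intro n hn
            have hnl : G.Adj l n := (SimpleGraph.mem_neighborFinset G l n).mp hn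
            have hnj : j ≠ n := by
              rintro rfl
              exact hadjl hnl.symm
            rw [← mul_assoc, horr i hnj, zero_mul]
          -- RHS of key is u i j * u k l
          have hR : ∑ m ∈ G.neighborFinset i, u i j * (u m l * u k l)
              = u i j * u k l := by
            rw [Finset.sum_eq_single k]
            · rw [hid]
            · intro m hm hmk
              rw [horc l hmk, mul_zero]
            · intro hk
              exact absurd ((SimpleGraph.mem_neighborFinset G i k).mpr hadik) hk
          rw [hL, hR] at key
          exact key.symm
        · have hadjl : G.Adj j l := by
            by_contra hadjl
            apply hrel
            unfold relType
            rw [if_neg hik, if_neg hadik, if_neg hjl, if_neg hadjl]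
          -- LHS of key is u i j * u k l
          have hL : ∑ n ∈ G.neighborFinset l, u i j * (u i n * u k l)
              = u i j * u k l := by
            rw [Finset.sum_eq_single j]
            · rw [← mul_assoc, hid]
            · intro n hn hnj
              rw [← mul_assoc, horr i (Ne.symm hnj), zero_mul]
            · intro hj
              exact absurd ((SimpleGraph.mem_neighborFinset G l j).mpr hadjl.symm) hj
          -- RHS of key is 0
          have hR : ∑ m ∈ G.neighborFinset i, u i j * (u m l * u k l) = 0 := by
            apply Finset.sum_eq_zero
            intro m hm
            have him : G.Adj i m := (SimpleGraph.mem_neighborFinset G i m).mp hm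
            have hmk : m ≠ k := by
              rintro rfl
              exact hadik him
            rw [horc l hmk, mul_zero]
          rw [hL, hR] at key
          exact key
  · intro h
    ext i l
    rw [SimpleGraph.mul_adjMatrix_apply, SimpleGraph.adjMatrix_mul_apply]
    have hL : ∑ n ∈ G.neighborFinset l, u i n
        = ∑ n ∈ G.neighborFinset l, ∑ m ∈ G.neighborFinset i, u i n * u m l := by
      refine Finset.sum_congr rfl fun n hn => ?_
      have hnl : G.Adj n l := ((SimpleGraph.mem_neighborFinset G l n).mp hn).symm
      calc u i n = ∑ m, u i n * u m l := by
            rw [← Finset.mul_sum, hcol l, mul_one]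
        _ = ∑ m ∈ G.neighborFinset i, u i n * u m l := by
            symm
            apply Finset.sum_subset (Finset.subset_univ _)
            intro m _ hm
            have him : ¬ G.Adj i m := fun ha =>
              hm ((SimpleGraph.mem_neighborFinset G i m).mpr ha)
            exact h i n m l
              (by rw [relType_eq_one' G hnl]; exact relType_ne_one' G him)
    have hR : ∑ m ∈ G.neighborFinset i, u m l
        = ∑ m ∈ G.neighborFinset i, ∑ n ∈ G.neighborFinset l, u i n * u m l := by
      refine Finset.sum_congr rfl fun m hm => ?_
      have him : G.Adj i m := (SimpleGraph.mem_neighborFinset G i m).mp hm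
      calc u m l = ∑ n, u i n * u m l := by
            rw [← Finset.sum_mul, hrow i, one_mul]
        _ = ∑ n ∈ G.neighborFinset l, u i n * u m l := by
            symm
            apply Finset.sum_subset (Finset.subset_univ _)
            intro n _ hn
            have hnl : ¬ G.Adj n l := fun ha =>
              hn ((SimpleGraph.mem_neighborFinset G l n).mpr ha.symm)
            refine h i n m l ?_
            rw [relType_eq_one' G him]
            exact fun hh => relType_ne_one' G hnl hh.symm
    rw [hL, hR, Finset.sum_comm]
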